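/- For every α > 2, the equation (π/α)·c² + c − (1 + c²)·arctan(c) = 0 has exactly one solution c in the open half-line (0, ∞). -/

import Mathlib

open Real

/-- **Lemma (P.4).** For `α > 2`, the equation `(π/α)c² + c - (1+c²) arctan c = 0`
has exactly one solution `c` in `(0, ∞)`. -/
theorem stmt4 (α : ℝ) (hα : 2 < α) :
    ∃! c : ℝ, 0 < c ∧ (π / α) * c ^ 2 + c - (1 + c ^ 2) * Real.arctan c = 0 := by
  have hαpos : (0:ℝ) < α := lt_trans two_pos hα
  have hπ : (0:ℝ) < π := Real.pi_pos
  have hq0 : 0 < π / α := div_pos hπ hαpos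
  have hq2 : π / α < π / 2 := div_lt_div_of_pos_left hπ two_pos hα
  set f : ℝ → ℝ := fun x => (π / α) * x ^ 2 + x - (1 + x ^ 2) * Real.arctan x with hf
  have hderiv : ∀ x : ℝ, HasDerivAt f (2 * x * (π / α - Real.arctan x)) x := by
    intro x
    have h1 : HasDerivAt (fun x : ℝ => (π / α) * x ^ 2) ((π/α) * (2 * x)) x := by
      simpa using ((hasDerivAt_pow 2 x).const_mul (π/α))
    have h2 : HasDerivAt (fun x : ℝ => (1 + x ^ 2)) (0 + 2 * x) x := by
      simpa using ((hasDerivAt_pow 2 x).const_add 1)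
    have h3 : HasDerivAt (fun x : ℝ => (1 + x ^ 2) * Real.arctan x)
        ((0 + 2 * x) * Real.arctan x + (1 + x ^ 2) * (1 / (1 + x ^ 2))) x :=
      h2.mul (Real.hasDerivAt_arctan x)
    have h4 := ((h1.add (hasDerivAt_id x)).sub h3)
    have hx2 : (1 : ℝ) + x ^ 2 ≠ 0 := by positivity
    refine h4.congr_deriv ?_
    rw [mul_one_div_cancel hx2]
    ring
  have hcont : Continuous f := by
    have : Continuous Real.arctan := Real.continuous_arctan
    fun_prop
  set t : ℝ := Real.tan (π / α) with hts
  have ht0 : 0 < t := Real.tan_pos_of_pos_of_lt_pi_div_two hq0 hq2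
  have harctant : Real.arctan t = π / α :=
    Real.arctan_tan (by linarith) hq2
  have hmono : StrictMonoOn f (Set.Icc 0 t) := by
    apply strictMonoOn_of_deriv_pos (convex_Icc 0 t) hcont.continuousOn
    intro x hx
    rw [interior_Icc] at hx
    rw [(hderiv x).deriv]
    have hax : Real.arctan x < π / α := by
      rw [← harctant]; exact Real.arctan_strictMono hx.2
    have h1 : 0 < 2 * x := by linarith [hx.1]
    exact mul_pos h1 (by linarith)
  have hanti : StrictAntiOn f (Set.Ici t) := by
    apply strictAntiOn_of_deriv_neg (convex_Ici t) hcont.continuousOn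
    intro x hx
    rw [interior_Ici] at hx
    rw [(hderiv x).deriv]
    have hax : π / α < Real.arctan x := by
      rw [← harctant]; exact Real.arctan_strictMono hx
    have hx' : t < x := hx
    have h1 : 0 < 2 * x := by linarith
    have : π / α - Real.arctan x < 0 := by linarith
    exact mul_neg_of_pos_of_neg h1 this
  have hf0 : f 0 = 0 := by simp [hf]
  have hft : 0 < f t := by
    have := hmono (Set.mem_Icc.mpr ⟨le_refl 0, ht0.le⟩)
      (Set.mem_Icc.mpr ⟨ht0.le, le_refl t⟩) ht0
    rwa [hf0] at this
  -- point where f is negative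
  set m : ℝ := (π / α + π / 2) / 2 with hm
  have hm1 : π / α < m := by rw [hm]; linarith
  have hm2 : m < π / 2 := by rw [hm]; linarith
  have hm0 : 0 < m := lt_trans hq0 hm1
  set δ : ℝ := m - π / α with hδ
  have hδ0 : 0 < δ := by rw [hδ]; linarith
  set s : ℝ := Real.tan m with hss
  have hs0 : 0 < s := Real.tan_pos_of_pos_of_lt_pi_div_two hm0 hm2
  have hts' : t < s := Real.tan_lt_tan_of_lt_of_lt_pi_div_two (by linarith) hm2 hm1
  set X : ℝ := s + 1 / δ with hX
  have hsX : s < X := by rw [hX]; have := one_div_pos.mpr hδ0; linarith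
  have hX0 : 0 < X := hs0.trans hsX
  have htX : t < X := hts'.trans hsX
  have harctanX : m < Real.arctan X := by
    have : Real.arctan s = m := Real.arctan_tan (by linarith) hm2
    rw [← this]; exact Real.arctan_strictMono hsX
  have hδX : 1 < δ * X := by
    have : δ * X = δ * s + 1 := by
      rw [hX]; field_simp
    rw [this]
    nlinarith [mul_pos hδ0 hs0]
  have hfX : f X < 0 := by
    clear_value X s δ m t
    have h1 : (1 + X ^ 2) * m < (1 + X ^ 2) * Real.arctan X :=
      mul_lt_mul_of_pos_left harctanX (by positivity)
    have h1' : m + m * X ^ 2 < (1 + X ^ 2) * Real.arctan X := by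
      calc m + m * X ^ 2 = (1 + X ^ 2) * m := by ring
      _ < _ := h1
    have h2' : X < δ * X ^ 2 := by nlinarith
    have hπα : π / α * X ^ 2 = m * X ^ 2 - δ * X ^ 2 := by rw [hδ]; ring
    have heq : f X = (π / α) * X ^ 2 + X - (1 + X ^ 2) * Real.arctan X := rfl
    rw [heq]
    nlinarith [h1', h2', hm0, hπα]
  -- existence of root
  have hivt := intermediate_value_Ioo' htX.le hcont.continuousOn
  have h0mem : (0:ℝ) ∈ Set.Ioo (f X) (f t) := ⟨hfX, hft⟩
  obtain ⟨c, hcmem, hfc⟩ := hivt h0mem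
  have hc_t : t < c := hcmem.1
  have hc0 : 0 < c := ht0.trans hc_t
  refine ⟨c, ⟨hc0, hfc⟩, ?_⟩
  rintro y ⟨hy0, hfy⟩
  have hyt : t < y := by
    by_contra hle
    push_neg at hle
    have := hmono (Set.mem_Icc.mpr ⟨le_refl 0, ht0.le⟩)
      (Set.mem_Icc.mpr ⟨hy0.le, hle⟩) hy0
    rw [hf0] at this
    have hfy' : f y = 0 := hfy
    linarith
  have hfy' : f y = 0 := hfy
  exact hanti.injOn (Set.mem_Ici.mpr hyt.le) (Set.mem_Ici.mpr hc_t.le)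
    (hfy'.trans hfc.symm)
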